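/- In the Laurent polynomial ring Z[t_1^{±1},...,t_n^{±1}], let ψ^p be the ring endomorphism with ψ^p(t_i) = t_i^p, let δ = ∏_{i=1}^n (t_i − 1), and let U_r = ∏_{i=1}^n (t_i^{p^r}−1)/(t_i−1). Then the kernel of the map Z[t^{±}]⊕Z[t^{±}] → Z[t^{±}], (b,a) ↦ U_r·b + ψ^p(a), equals {(δ·ψ^p(a), −ψ^{p,(r-1)}(δ)·a) : a ∈ Z[t^{±}]}, where ψ^{p,(r-1)} denotes the (r−1)-fold iterate of ψ^p. -/

import Mathlib

open AddMonoidAlgebra Finsupp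



section Vanish
variable {G : Type*} [AddCommGroup G]

lemma shift_iter (x : AddMonoidAlgebra ℤ G) (h : G)
    (hx : AddMonoidAlgebra.single h (1:ℤ) * x = x) :
    ∀ (k : ℕ) (γ : G), x.coeff (γ - k • h) = x.coeff γ := by
  have hs : ∀ γ : G, x.coeff γ = x.coeff (γ - h) := by
    intro γ
    conv_lhs => rw [← hx]
    rw [AddMonoidAlgebra.coeff_single_mul_apply, one_mul, neg_add_eq_sub]
  intro k
  induction k with
  | zero => simp
  | succ k ih =>
      intro γ
      have e : γ - (k + 1) • h = (γ - k • h) - h := by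
        rw [add_smul, one_smul]; abel
      rw [e, ← hs (γ - k • h), ih γ]

/-- vanishing lemma, `ZMod p` version -/
lemma vanish_zmod {p : ℕ} (hp : 1 < p) (χ : G →+ ZMod p) (h : G) (hh : χ h = 1)
    (x : AddMonoidAlgebra ℤ G)
    (hx : AddMonoidAlgebra.single h (1:ℤ) * x = x)
    (hv : ∀ γ : G, χ γ ≠ 0 → x.coeff γ = 0) : x = 0 := by
  haveI : NeZero p := ⟨by omega⟩
  haveI : Fact (1 < p) := ⟨hp⟩
  ext γ
  have key := shift_iter x h hx ((χ γ).val + p - 1) γ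
  have hcast : (((χ γ).val + p - 1 : ℕ) : ZMod p) = χ γ - 1 := by
    have h1 : ((χ γ).val + p - 1 : ℕ) = (χ γ).val + (p - 1) := by omega
    have h2 : ((χ γ).val : ZMod p) = χ γ := ZMod.natCast_rightInverse (χ γ)
    have h3 : ((p - 1 : ℕ) : ZMod p) = -1 := by
      have : ((p - 1 : ℕ) : ZMod p) = (p : ZMod p) - 1 := by
        push_cast [Nat.cast_sub (by omega : 1 ≤ p)]; ring
      rw [this, ZMod.natCast_self, zero_sub]
    rw [h1, Nat.cast_add, h2, h3]; ring
  have hχ : χ (γ - ((χ γ).val + p - 1) • h) ≠ 0 := by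
    rw [map_sub, map_nsmul, hh]
    rw [show ((χ γ).val + p - 1) • (1 : ZMod p) = (((χ γ).val + p - 1 : ℕ) : ZMod p) by
      simp [nsmul_eq_mul]]
    rw [hcast]
    simp only [sub_sub_cancel]
    exact one_ne_zero
  have := hv _ hχ
  rw [this] at key
  simpa using key.symm

/-- vanishing lemma, `ℤ` version -/
lemma vanish_int (χ : G →+ ℤ) (h : G) (hh : χ h ≠ 0)
    (x : AddMonoidAlgebra ℤ G)
    (hx : AddMonoidAlgebra.single h (1:ℤ) * x = x) : x = 0 := by
  by_contra hne
  obtain ⟨γ, hγ⟩ := Finsupp.ne_iff.mp (mt AddMonoidAlgebra.coeff_eq_zero.mp hne)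
  simp only [Finsupp.coe_zero, Pi.zero_apply] at hγ
  have hmem : ∀ k : ℕ, (γ - k • h) ∈ x.coeff.support := by
    intro k
    rw [Finsupp.mem_support_iff, shift_iter x h hx k γ]
    exact hγ
  have hinj : Function.Injective (fun k : ℕ => γ - k • h) := by
    intro k l hkl
    simp only at hkl
    have h1 : χ (γ - k • h) = χ (γ - l • h) := by rw [hkl]
    simp only [map_sub, map_nsmul, smul_eq_mul] at h1
    have h2 : (k : ℤ) * χ h = (l : ℤ) * χ h := by
      have := sub_right_injective h1
      simpa [nsmul_eq_mul] using this
    have := mul_right_cancel₀ hh h2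
    exact_mod_cast this
  have : (↑x.coeff.support : Set G).Infinite :=
    Set.infinite_of_injective_forall_mem hinj (fun k => hmem k)
  exact this (x.coeff.support.finite_toSet)

end Vanish



section Ker
variable {n : ℕ}

local notation "R" => AddMonoidAlgebra ℤ (Fin n → ℤ)

lemma sub_one_dvd_single_zsmul (g : Fin n → ℤ) (k : ℤ) :
    (AddMonoidAlgebra.single g (1:ℤ) - 1) ∣ (AddMonoidAlgebra.single (k • g) (1:ℤ) - 1) := by
  set u : R := AddMonoidAlgebra.single g (1:ℤ) with hu
  have hpow : ∀ m : ℕ, u ^ m = AddMonoidAlgebra.single ((m : ℤ) • g) (1:ℤ) := by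
    intro m
    rw [hu, AddMonoidAlgebra.single_pow, one_pow, natCast_zsmul]
  have hdvd_pow : ∀ m : ℕ, (u - 1) ∣ (AddMonoidAlgebra.single ((m:ℤ) • g) (1:ℤ) - 1) := by
    intro m
    rw [← hpow]
    simpa using sub_dvd_pow_sub_pow u 1 m
  rcases k with m | m
  · exact_mod_cast hdvd_pow m
  · rw [Int.negSucc_eq]
    set v : R := AddMonoidAlgebra.single ((-((m:ℤ)+1)) • g) (1:ℤ) with hv
    have huv : AddMonoidAlgebra.single ((((m:ℤ))+1) • g) (1:ℤ) * v = 1 := by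
      rw [hv, AddMonoidAlgebra.single_mul_single, one_mul, ← add_smul]
      rw [show ((m:ℤ)+1) + (-((m:ℤ)+1)) = 0 by ring, zero_smul]
      rfl
    have hfac : v - 1 = -v * (AddMonoidAlgebra.single (((m:ℤ)+1) • g) (1:ℤ) - 1) := by
      rw [neg_mul, mul_sub, mul_one, mul_comm, huv]; ring
    have hd : (u - 1) ∣ (v - 1) := by
      rw [hfac]
      have := hdvd_pow (m+1)
      push_cast at this
      exact Dvd.dvd.mul_left this _
    exact hd

lemma ker_quotient_dvd (i : Fin n) (M : ℤ) (hM : M ≠ 0) (a : R)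
    (ha : Finsupp.mapDomain (⇑(QuotientAddGroup.mk' (AddSubgroup.zmultiples (M • Pi.single i 1)))) a.coeff = 0) :
    (AddMonoidAlgebra.single (M • Pi.single i 1) (1:ℤ) - 1) ∣ a := by
  set g : Fin n → ℤ := M • Pi.single i 1 with hg
  have hgj : ∀ j, g j = if j = i then M else 0 := by
    intro j; by_cases hj : j = i <;> simp [hg, hj, Pi.single_apply]
  set q := QuotientAddGroup.mk' (AddSubgroup.zmultiples g) with hq
  set ρ : (Fin n → ℤ) → (Fin n → ℤ) := fun v => v + ((v i % M) - v i) • Pi.single i 1 with hρ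
  have hρapp : ∀ v j, ρ v j = if j = i then v i % M else v j := by
    intro v j
    by_cases hj : j = i
    · subst hj; simp [hρ, Pi.single_apply]
    · simp [hρ, Pi.single_apply, hj]
  have hρcoset : ∀ (v : Fin n → ℤ) (k : ℤ), ρ (v + k • g) = ρ v := by
    intro v k
    funext j
    rw [hρapp, hρapp]
    have h1 : (v + k • g) i = v i + k * M := by simp [hgj]
    have h2 : (v + k • g) j = v j + k * g j := by simp
    by_cases hj : j = i
    · subst hj
      rw [if_pos rfl, if_pos rfl, h1, Int.add_mul_emod_self_right]
    · rw [if_neg hj, if_neg hj, h2, hgj, if_neg hj, mul_zero, add_zero]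
  have hρrep : ∀ v : Fin n → ℤ, v = ρ v + (v i / M) • g := by
    intro v
    funext j
    rw [Pi.add_apply, hρapp]
    by_cases hj : j = i
    · subst hj
      rw [if_pos rfl, Pi.smul_apply, hgj, if_pos rfl, smul_eq_mul]
      have := Int.emod_add_mul_ediv (v j) M
      rw [mul_comm]
      omega
    · rw [if_neg hj, Pi.smul_apply, hgj, if_neg hj, smul_eq_mul, mul_zero, add_zero]
  have hρconst : ∀ v w : Fin n → ℤ, q v = q w → ρ v = ρ w := by
    intro v w hvw
    rw [QuotientAddGroup.mk'_eq_mk'] at hvw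
    obtain ⟨z, hz, hzw⟩ := hvw
    obtain ⟨k, hk⟩ := AddSubgroup.mem_zmultiples_iff.mp hz
    rw [← hzw, ← hk]
    exact (hρcoset v k).symm
  set s : ((Fin n → ℤ) ⧸ AddSubgroup.zmultiples g) → (Fin n → ℤ) :=
    fun γ => Quotient.liftOn' γ ρ (fun v w hvw => hρconst v w (Quotient.sound' hvw)) with hs
  have hsq : ∀ v, s (q v) = ρ v := fun v => rfl
  have hmapρ : Finsupp.mapDomain ρ a.coeff = 0 := by
    have hcomp : ρ = s ∘ ⇑q := by funext v; simp [hsq]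
    rw [hcomp, Finsupp.mapDomain_comp, ha, Finsupp.mapDomain_zero]
  have ha2 : a = a.coeff.sum (fun v c => AddMonoidAlgebra.single v c - AddMonoidAlgebra.single (ρ v) c) := by
    have h1 : a.coeff.sum (fun v c => AddMonoidAlgebra.single v c - AddMonoidAlgebra.single (ρ v) c)
        = a.coeff.sum (fun v c => AddMonoidAlgebra.single v c) - a.coeff.sum (fun v c => AddMonoidAlgebra.single (ρ v) c) := by
      rw [Finsupp.sum_sub]
    rw [h1, AddMonoidAlgebra.sum_coeff_single a, show a.coeff.sum (fun v c => AddMonoidAlgebra.single (ρ v) c) = AddMonoidAlgebra.ofCoeff (Finsupp.mapDomain ρ a.coeff) by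
        rw [Finsupp.mapDomain, AddMonoidAlgebra.ofCoeff_finsuppSum]; rfl,
      hmapρ, AddMonoidAlgebra.ofCoeff_zero, sub_zero]
  rw [ha2]
  apply Finset.dvd_sum
  intro v hv
  dsimp only
  have hadd : (v i / M) • g + ρ v = v := by rw [add_comm]; exact (hρrep v).symm
  have hterm : AddMonoidAlgebra.single v (a.coeff v) - AddMonoidAlgebra.single (ρ v) (a.coeff v)
      = AddMonoidAlgebra.single (ρ v) (a.coeff v) * (AddMonoidAlgebra.single ((v i / M) • g) (1:ℤ) - 1) := by
    rw [mul_sub, mul_one, AddMonoidAlgebra.single_mul_single, mul_one, add_comm, hadd]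
  rw [hterm]
  exact Dvd.dvd.mul_left (sub_one_dvd_single_zsmul g _) _
end Ker




section Step1
variable {n : ℕ}
local notation "R" => AddMonoidAlgebra ℤ (Fin n → ℤ)

lemma step1 (p r : ℕ) (hp : p.Prime) (hr : 1 ≤ r) (ψ : R →+* R)
    (hψmap : ∀ x : R, (ψ x).coeff = Finsupp.mapDomain (fun v : Fin n → ℤ => p • v) x.coeff)
    (Ur b a : R) (h0 : Ur * b + ψ a = 0)
    (hUrg : ∀ i : Fin n, ∃ V : R,
      (AddMonoidAlgebra.single (Pi.single i 1) (1:ℤ) - 1) * Ur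
        = (AddMonoidAlgebra.single (((p^r : ℕ) : ℤ) • Pi.single i 1) (1:ℤ) - 1) * V)
    (i : Fin n) :
    Finsupp.mapDomain
      (⇑(QuotientAddGroup.mk' (AddSubgroup.zmultiples (((p^(r-1) : ℕ) : ℤ) • Pi.single i 1)))) a.coeff
      = 0 := by
  have hp0 : (p : ℤ) ≠ 0 := by exact_mod_cast hp.ne_zero
  set M' : ℤ := ((p^(r-1) : ℕ) : ℤ) with hM'
  set M : ℤ := ((p^r : ℕ) : ℤ) with hM
  have hpM : (p : ℤ) * M' = M := by
    rw [hM', hM]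
    push_cast
    rw [← pow_succ']
    congr 1
    omega
  set H : AddSubgroup (Fin n → ℤ) := AddSubgroup.zmultiples (M • Pi.single i 1) with hH
  set H' : AddSubgroup (Fin n → ℤ) := AddSubgroup.zmultiples (M' • Pi.single i 1) with hH'
  set q := QuotientAddGroup.mk' H with hq
  set q' := QuotientAddGroup.mk' H' with hq'
  set f : (Fin n → ℤ) →+ (Fin n → ℤ) :=
    AddMonoidHom.mk' (fun v => p • v) (fun x y => smul_add p x y) with hf
  have hfH : H' ≤ H.comap f := by
    rintro x hx
    obtain ⟨k, hk⟩ := AddSubgroup.mem_zmultiples_iff.mp hx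
    rw [AddSubgroup.mem_comap]
    apply AddSubgroup.mem_zmultiples_iff.mpr
    refine ⟨k, ?_⟩
    rw [← hk]
    show k • (M • (Pi.single i 1 : Fin n → ℤ)) = p • (k • (M' • (Pi.single i 1 : Fin n → ℤ)))
    rw [← natCast_zsmul, smul_smul, smul_smul, smul_smul]
    rw [← hpM]
    congr 1
    ring
  set pbar := QuotientAddGroup.map H' H f hfH with hpbar
  have hcomm : ∀ v : Fin n → ℤ, q (p • v) = pbar (q' v) := by
    intro v
    rw [hq, hq', hpbar, QuotientAddGroup.map_mk']
    rfl
  have hsq : Finsupp.mapDomain ⇑q (ψ a).coeff = Finsupp.mapDomain ⇑pbar (Finsupp.mapDomain ⇑q' a.coeff) := by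
    rw [hψmap, ← Finsupp.mapDomain_comp]
    have hfun : (⇑q ∘ fun v : Fin n → ℤ => p • v) = ⇑pbar ∘ ⇑q' := funext hcomm
    rw [hfun, Finsupp.mapDomain_comp]
  have hpbar_inj : Function.Injective ⇑pbar := by
    intro z w hzw
    induction z using QuotientAddGroup.induction_on with | H z =>
    induction w using QuotientAddGroup.induction_on with | H w =>
    have h1 : pbar (z : (Fin n → ℤ) ⧸ H') = q (f z) := by
      rw [hpbar, hq, show ((z : (Fin n → ℤ) ⧸ H')) = QuotientAddGroup.mk' H' z from rfl,
        QuotientAddGroup.map_mk', QuotientAddGroup.mk'_apply]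
    have h2 : pbar (w : (Fin n → ℤ) ⧸ H') = q (f w) := by
      rw [hpbar, hq, show ((w : (Fin n → ℤ) ⧸ H')) = QuotientAddGroup.mk' H' w from rfl,
        QuotientAddGroup.map_mk', QuotientAddGroup.mk'_apply]
    rw [h1, h2, hq, QuotientAddGroup.mk'_apply, QuotientAddGroup.mk'_apply] at hzw
    rw [QuotientAddGroup.eq_iff_sub_mem] at hzw ⊢
    obtain ⟨k, hk⟩ := AddSubgroup.mem_zmultiples_iff.mp hzw
    apply AddSubgroup.mem_zmultiples_iff.mpr
    refine ⟨k, ?_⟩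
    have hk' : k • (M • Pi.single i 1) = f z - f w := hk
    have hfzw : f z - f w = p • (z - w) := by
      show p • z - p • w = p • (z - w)
      rw [smul_sub]
    rw [hfzw] at hk'
    funext j
    have hthis := congrFun hk' j
    simp only [Pi.smul_apply, Pi.sub_apply, smul_eq_mul, Pi.single_apply,
      nsmul_eq_mul] at hthis ⊢
    by_cases hj : j = i
    · rw [if_pos hj] at hthis ⊢
      have h3 : (p:ℤ) * (z j - w j) = (p:ℤ) * (k * (M' * 1)) := by
        rw [← hthis, ← hpM]; ring
      exact (mul_left_cancel₀ hp0 h3).symm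
    · rw [if_neg hj] at hthis ⊢
      rw [mul_zero, mul_zero]
      have h4 : (p:ℤ) * (z j - w j) = 0 := by rw [← hthis]; ring
      rcases mul_eq_zero.mp h4 with h | h
      · exact absurd h hp0
      · omega
  -- character to ZMod p
  set χ₀ : (Fin n → ℤ) →+ ZMod p :=
    (Int.castAddHom (ZMod p)).comp (Pi.evalAddMonoidHom (fun _ : Fin n => ℤ) i) with hχ₀
  have hχ₀app : ∀ v : Fin n → ℤ, χ₀ v = ((v i : ℤ) : ZMod p) := fun v => rfl
  have hMzero : ((M : ℤ) : ZMod p) = 0 := by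
    rw [hM]; push_cast
    rw [ZMod.natCast_self]
    exact zero_pow (by omega)
  have hχ₀H : ∀ x ∈ H, χ₀ x = 0 := by
    intro x hx
    obtain ⟨k, hk⟩ := AddSubgroup.mem_zmultiples_iff.mp hx
    rw [← hk, hχ₀app]
    have he : (k • (M • (Pi.single i 1 : Fin n → ℤ))) i = k * M := by
      simp [Pi.single_apply]
    rw [he]; push_cast [hMzero]
    simp [hMzero]
  set χ : ((Fin n → ℤ) ⧸ H) →+ ZMod p := QuotientAddGroup.lift H χ₀ hχ₀H with hχ
  have hχq : ∀ v, χ (q v) = χ₀ v := fun v => rfl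
  have hχe : χ (q (Pi.single i 1)) = 1 := by rw [hχq, hχ₀app]; simp
  set φ : R →+* AddMonoidAlgebra ℤ ((Fin n → ℤ) ⧸ H) := AddMonoidAlgebra.mapDomainRingHom ℤ q with hφ
  have hφapp : ∀ x : R, (φ x).coeff = Finsupp.mapDomain ⇑q x.coeff := fun x => rfl
  have hφsingle : ∀ (v : Fin n → ℤ) (c : ℤ),
      φ (AddMonoidAlgebra.single v c) = AddMonoidAlgebra.single (q v) c := by
    intro v c; apply AddMonoidAlgebra.coeff_injective; rw [hφapp]; exact Finsupp.mapDomain_single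
  set y := φ (Ur * b) with hy
  obtain ⟨V, hV⟩ := hUrg i
  have hqM : q (M • Pi.single i 1) = 0 := by
    rw [hq, QuotientAddGroup.mk'_apply, QuotientAddGroup.eq_zero_iff]
    exact AddSubgroup.mem_zmultiples _
  have hφM : φ (AddMonoidAlgebra.single (M • Pi.single i 1) (1:ℤ)) = 1 := by
    rw [hφsingle, hqM]; exact (AddMonoidAlgebra.one_def).symm
  have hkill : φ ((AddMonoidAlgebra.single (Pi.single i 1) (1:ℤ) - 1) * Ur) = 0 := by
    rw [hV, map_mul, map_sub, map_one, hφM, sub_self, zero_mul]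
  have h1 : AddMonoidAlgebra.single (q (Pi.single i 1)) (1:ℤ) * y = y := by
    have e1 : φ (AddMonoidAlgebra.single (Pi.single i 1) (1:ℤ)) * φ Ur = φ Ur := by
      have h5 := hkill
      rw [map_mul, map_sub, map_one, sub_mul, one_mul, sub_eq_zero] at h5
      exact h5
    rw [hy, map_mul, ← mul_assoc, ← hφsingle, e1]
  have hUrb : Ur * b = -(ψ a) := eq_neg_of_add_eq_zero_left h0
  have hyneg : y.coeff = -(Finsupp.mapDomain ⇑pbar (Finsupp.mapDomain ⇑q' a.coeff)) := by
    rw [hy, hUrb, map_neg, AddMonoidAlgebra.coeff_neg, hφapp, hsq]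
  have hχpbar : ∀ z, χ (pbar z) = 0 := by
    intro z
    induction z using QuotientAddGroup.induction_on with | H v =>
    have e2 : pbar ((v : (Fin n → ℤ) ⧸ H')) = q (f v) := by
      rw [hpbar, hq, show ((v : (Fin n → ℤ) ⧸ H')) = QuotientAddGroup.mk' H' v from rfl,
        QuotientAddGroup.map_mk', QuotientAddGroup.mk'_apply]
    rw [e2, hχq, hχ₀app]
    have e3 : (f v) i = (p:ℤ) * v i := by
      show (p • v) i = _
      simp [nsmul_eq_mul]
    rw [e3]; push_cast; rw [ZMod.natCast_self]; ring
  have h2 : ∀ γ, χ γ ≠ 0 → y.coeff γ = 0 := by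
    intro γ hγ
    have hnot : γ ∉ Set.range ⇑pbar := by
      rintro ⟨z, rfl⟩; exact hγ (hχpbar z)
    have h6 := Finsupp.mapDomain_notin_range (Finsupp.mapDomain ⇑q' a.coeff) γ hnot
    rw [hyneg]
    show (-(Finsupp.mapDomain ⇑pbar (Finsupp.mapDomain ⇑q' a.coeff))) γ = 0
    rw [Finsupp.neg_apply, h6, neg_zero]
  have hy0 : y = 0 := vanish_zmod hp.one_lt χ (q (Pi.single i 1)) hχe y h1 h2
  have hmap0 : Finsupp.mapDomain ⇑pbar (Finsupp.mapDomain ⇑q' a.coeff) = 0 := by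
    have h7 := hyneg
    rw [hy0, AddMonoidAlgebra.coeff_zero] at h7
    exact (neg_eq_zero.mp h7.symm)
  apply Finsupp.mapDomain_injective hpbar_inj
  rw [hmap0, Finsupp.mapDomain_zero]
end Step1





section Step2
variable {n : ℕ}
local notation "R" => AddMonoidAlgebra ℤ (Fin n → ℤ)

lemma prod_dvd (m' : ℕ) (hm' : 0 < m') (a : R)
    (hker : ∀ i : Fin n, Finsupp.mapDomain
      (⇑(QuotientAddGroup.mk' (AddSubgroup.zmultiples (((m' : ℕ) : ℤ) • Pi.single i 1)))) a.coeff = 0) :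
    (∏ i, (AddMonoidAlgebra.single (((m' : ℕ) : ℤ) • Pi.single i 1) (1:ℤ) - 1)) ∣ a := by
  set M' : ℤ := ((m' : ℕ) : ℤ) with hM'
  have hM'0 : M' ≠ 0 := by rw [hM']; exact_mod_cast hm'.ne'
  suffices h : ∀ S : Finset (Fin n),
      (∏ i ∈ S, (AddMonoidAlgebra.single (M' • Pi.single i 1) (1:ℤ) - 1)) ∣ a by
    exact h Finset.univ
  intro S
  induction S using Finset.induction_on with
  | empty => simpa using one_dvd a
  | @insert i S hiS ih =>
    obtain ⟨aS, haS⟩ := ih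
    set H' : AddSubgroup (Fin n → ℤ) := AddSubgroup.zmultiples (M' • Pi.single i 1) with hH'
    set q' := QuotientAddGroup.mk' H' with hq'
    set φ : R →+* AddMonoidAlgebra ℤ ((Fin n → ℤ) ⧸ H') := AddMonoidAlgebra.mapDomainRingHom ℤ q' with hφ
    have hφapp : ∀ x : R, (φ x).coeff = Finsupp.mapDomain ⇑q' x.coeff := fun x => rfl
    have hφsingle : ∀ (v : Fin n → ℤ) (c : ℤ),
        φ (AddMonoidAlgebra.single v c) = AddMonoidAlgebra.single (q' v) c := by
      intro v c; apply AddMonoidAlgebra.coeff_injective; rw [hφapp]; exact Finsupp.mapDomain_single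
    have h1 : φ ((∏ j ∈ S, (AddMonoidAlgebra.single (M' • Pi.single j 1) (1:ℤ) - 1)) * aS) = 0 := by
      rw [← haS]; apply AddMonoidAlgebra.coeff_injective; rw [hφapp]; exact hker i
    rw [map_mul, map_prod] at h1
    -- kill the factors
    have hreg : ∀ j, j ≠ i → ∀ z : AddMonoidAlgebra ℤ ((Fin n → ℤ) ⧸ H'),
        φ (AddMonoidAlgebra.single (M' • Pi.single j 1) (1:ℤ) - 1) * z = 0 → z = 0 := by
      intro j hj z hz
      rw [map_sub, map_one, hφsingle, sub_mul, one_mul, sub_eq_zero] at hz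
      set χ₀ : (Fin n → ℤ) →+ ℤ := Pi.evalAddMonoidHom (fun _ : Fin n => ℤ) j with hχ₀
      have hχ₀H : ∀ x ∈ H', χ₀ x = 0 := by
        intro x hx
        obtain ⟨k, hk⟩ := AddSubgroup.mem_zmultiples_iff.mp hx
        have : χ₀ x = x j := rfl
        rw [this, ← hk]
        have : (k • (M' • (Pi.single i 1 : Fin n → ℤ))) j = k * (M' * 0) := by
          simp [Pi.single_apply, hj]
        rw [this]; ring
      set χ : ((Fin n → ℤ) ⧸ H') →+ ℤ := QuotientAddGroup.lift H' χ₀ hχ₀H with hχ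
      have hχh : χ (q' (M' • Pi.single j 1)) = M' := by
        have : χ (q' (M' • Pi.single j 1)) = χ₀ (M' • Pi.single j 1) := rfl
        rw [this]
        have : χ₀ (M' • (Pi.single j 1 : Fin n → ℤ)) = M' * 1 := by
          simp [hχ₀, Pi.single_apply]
        rw [this, mul_one]
      exact vanish_int χ (q' (M' • Pi.single j 1)) (by rw [hχh]; exact hM'0) z hz
    have hkill : ∀ (T : Finset (Fin n)), i ∉ T →
        ∀ z : AddMonoidAlgebra ℤ ((Fin n → ℤ) ⧸ H'),
        (∏ j ∈ T, φ (AddMonoidAlgebra.single (M' • Pi.single j 1) (1:ℤ) - 1)) * z = 0 → z = 0 := by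
      intro T
      induction T using Finset.induction_on with
      | empty => intro _ z hz; simpa using hz
      | @insert j T hjT ihT =>
        intro hiT z hz
        have hji : j ≠ i := fun h => hiT (h ▸ Finset.mem_insert_self j T)
        rw [Finset.prod_insert hjT, mul_assoc] at hz
        have := hreg j hji _ hz
        exact ihT (fun h => hiT (Finset.mem_insert_of_mem h)) z this
    have h2 : φ aS = 0 := hkill S hiS (φ aS) h1
    have h3 : (AddMonoidAlgebra.single (M' • Pi.single i 1) (1:ℤ) - 1) ∣ aS :=
      ker_quotient_dvd i M' hM'0 aS (by rw [← hφapp]; exact congrArg AddMonoidAlgebra.coeff h2)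
    obtain ⟨c, hc⟩ := h3
    refine ⟨c, ?_⟩
    rw [Finset.prod_insert hiS, haS, hc]
    ring
end Step2






/-- In the Laurent polynomial ring
`ℤ[X(T)] = ℤ[t_1^{±1},...,t_n^{±1}]` (realized as `AddMonoidAlgebra ℤ (Fin n → ℤ)`),
with `ψ^p` the ring endomorphism `t_i ↦ t_i^p`, `δ = ∏ (t_i - 1)` and
`U_r = ∏ (t_i^{p^r}-1)/(t_i-1) = ∏ (1 + t_i + ... + t_i^{p^r-1})`, the kernel of
`(b,a) ↦ U_r·b + ψ^p(a)` consists exactly of the pairs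
`(δ·ψ^p(c), −ψ^{p,(r-1)}(δ)·c)` for `c ∈ ℤ[X(T)]`. -/
theorem stmt_16 (p : ℕ) (hp : p.Prime) (n r : ℕ) (hn : 1 ≤ n) (hr : 1 ≤ r)
    (ψ : AddMonoidAlgebra ℤ (Fin n → ℤ) →+* AddMonoidAlgebra ℤ (Fin n → ℤ))
    (hψ : ∀ (a : Fin n → ℤ) (b : ℤ),
      ψ (AddMonoidAlgebra.single a b) = AddMonoidAlgebra.single (p • a) b)
    (t : Fin n → AddMonoidAlgebra ℤ (Fin n → ℤ))
    (ht : ∀ i, t i = AddMonoidAlgebra.single (Pi.single i 1) 1)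
    (δ Ur : AddMonoidAlgebra ℤ (Fin n → ℤ))
    (hδ : δ = ∏ i, (t i - 1))
    (hUr : Ur = ∏ i, ∑ a ∈ Finset.range (p ^ r), t i ^ a) :
    ∀ b a, Ur * b + ψ a = 0 ↔ ∃ c, b = δ * ψ c ∧ a = -((⇑ψ)^[r - 1] δ * c) := by
  have hψmap : ∀ x : AddMonoidAlgebra ℤ (Fin n → ℤ), (ψ x).coeff = Finsupp.mapDomain (fun v : Fin n → ℤ => p • v) x.coeff := by
    intro x
    induction x using AddMonoidAlgebra.induction_linear with
    | zero => rw [map_zero, AddMonoidAlgebra.coeff_zero, Finsupp.mapDomain_zero]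
    | add f g hf hg => rw [map_add, AddMonoidAlgebra.coeff_add, AddMonoidAlgebra.coeff_add, Finsupp.mapDomain_add, hf, hg]
    | single v c => rw [hψ v c, AddMonoidAlgebra.coeff_single, AddMonoidAlgebra.coeff_single, Finsupp.mapDomain_single]
  have htik : ∀ (i : Fin n) (k : ℕ),
      t i ^ k = AddMonoidAlgebra.single (k • Pi.single i 1) (1:ℤ) := by
    intro i k
    rw [ht i, AddMonoidAlgebra.single_pow, one_pow]
  have hψt : ∀ i, ψ (t i) = t i ^ p := by
    intro i
    rw [htik i p, ht i]
    exact hψ _ 1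
  have hiter : ∀ k, (⇑ψ)^[k] δ = ∏ j, (t j ^ (p^k) - 1) := by
    intro k
    induction k with
    | zero => simpa [hδ] using rfl
    | succ k ihk =>
      rw [Function.iterate_succ_apply', ihk, map_prod]
      refine Finset.prod_congr rfl (fun j _ => ?_)
      rw [map_sub, map_one, map_pow, hψt, ← pow_mul, ← pow_succ']
  have hUrδ : Ur * δ = ∏ j, (t j ^ (p^r) - 1) := by
    rw [hUr, hδ, ← Finset.prod_mul_distrib]
    exact Finset.prod_congr rfl (fun j _ => geom_sum_mul (t j) (p^r))
  have hr1 : r - 1 + 1 = r := by omega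
  have hψiter : ψ ((⇑ψ)^[r-1] δ) = ∏ j, (t j ^ (p^r) - 1) := by
    have hr2 : (r - 1).succ = r := by omega
    rw [← Function.iterate_succ_apply' ψ (r-1) δ, hr2, hiter r]
  have hUrne : Ur ≠ 0 := by
    set ε := AddMonoidAlgebra.liftNCRingHom (Int.castRingHom ℤ)
      (1 : Multiplicative (Fin n → ℤ) →* ℤ) (fun x y => Commute.all _ _) with hε
    have hεs : ∀ (v : Fin n → ℤ) (c : ℤ), ε (AddMonoidAlgebra.single v c) = c := by
      intro v c
      rw [hε]
      show AddMonoidAlgebra.liftNC _ _ _ = c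
      rw [AddMonoidAlgebra.liftNC_single]
      simp
    have hεUr : ε Ur = ((p^r : ℕ) : ℤ)^n := by
      rw [hUr, map_prod]
      have : ∀ i : Fin n, ε (∑ a ∈ Finset.range (p ^ r), t i ^ a) = ((p^r : ℕ) : ℤ) := by
        intro i
        rw [map_sum]
        rw [Finset.sum_congr rfl (fun k _ => by rw [htik, hεs])]
        simp
      rw [Finset.prod_congr rfl (fun i _ => this i)]
      simp
    intro h
    rw [h, map_zero] at hεUr
    have hne : ((p^r : ℕ) : ℤ) ^ n ≠ 0 := by
      apply pow_ne_zero
      exact_mod_cast pow_ne_zero r hp.ne_zero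
    exact hne hεUr.symm
  intro b a
  constructor
  · intro h0
    have hUrg : ∀ i : Fin n, ∃ V : AddMonoidAlgebra ℤ (Fin n → ℤ),
        (AddMonoidAlgebra.single (Pi.single i 1) (1:ℤ) - 1) * Ur
          = (AddMonoidAlgebra.single (((p^r : ℕ) : ℤ) • Pi.single i 1) (1:ℤ) - 1) * V := by
      intro i
      refine ⟨∏ j ∈ Finset.univ.erase i, ∑ k ∈ Finset.range (p ^ r), t j ^ k, ?_⟩
      have hsplit : Ur = (∑ k ∈ Finset.range (p ^ r), t i ^ k) *
          ∏ j ∈ Finset.univ.erase i, ∑ k ∈ Finset.range (p ^ r), t j ^ k := by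
        rw [hUr, ← Finset.mul_prod_erase _ _ (Finset.mem_univ i)]
      rw [← ht i, hsplit, ← mul_assoc, mul_comm (t i - 1), geom_sum_mul]
      have he : t i ^ (p^r) = AddMonoidAlgebra.single (((p^r : ℕ) : ℤ) • Pi.single i 1) (1:ℤ) := by
        rw [htik i (p^r), natCast_zsmul]
      rw [he]
    have hker := fun i => step1 p r hp hr ψ hψmap Ur b a h0 hUrg i
    have hdvd := prod_dvd (p^(r-1)) (pow_pos hp.pos (r-1)) a hker
    have hD : (⇑ψ)^[r-1] δ = ∏ i, (AddMonoidAlgebra.single (((p^(r-1) : ℕ) : ℤ) • Pi.single i 1) (1:ℤ) - 1) := by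
      rw [hiter (r-1)]
      refine Finset.prod_congr rfl (fun i _ => ?_)
      rw [htik i (p^(r-1)), natCast_zsmul]
    rw [← hD] at hdvd
    obtain ⟨d, hd⟩ := hdvd
    refine ⟨-d, ?_, ?_⟩
    · apply mul_left_cancel₀ hUrne
      have h5 : Ur * b = -(ψ a) := eq_neg_of_add_eq_zero_left h0
      rw [h5, hd, map_mul, hψiter, map_neg, ← hUrδ]
      ring
    · rw [hd]; ring
  · rintro ⟨c, hb, ha⟩
    rw [hb, ha, map_neg, map_mul, hψiter]
    rw [show Ur * (δ * ψ c) = (Ur * δ) * ψ c from by ring, hUrδ]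
    ring
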